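/- Let N be a network. Then every connected component, ignoring edge directions, of the subgraph N − R(N) induced on the tree nodes of N contains exactly one node whose indegree within N − R(N) is zero, and this component is a tree in which all edges are directed away from that node. -/

import Mathlib

/-!
Framework for rooted phylogenetic networks, formalized as directed graphs
given by an adjacency relation `A : V → V → Prop` on a vertex type `V`,
with a distinguished root `ρ`.  Leaves are identified with their (unique)
labels, i.e. the labelling is the identity on leaf vertices.
-/

namespace PhyloNet

variable {V : Type} {W : Type}

/-- Indegree of a vertex. -/
noncomputable def inDeg (A : V → V → Prop) (v : V) : ℕ := {u | A u v}.ncard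

/-- Outdegree of a vertex. -/
noncomputable def outDeg (A : V → V → Prop) (v : V) : ℕ := {w | A v w}.ncard

/-- `p` is a directed path (walk) from `u` to `v`, given as the list of its vertices. -/
def IsPath (A : V → V → Prop) (u v : V) (p : List V) : Prop :=
  p.Chain' A ∧ p.head? = some u ∧ p.getLast? = some v

/-- `A` with root `ρ` is a phylogenetic network: a finite rooted acyclic digraph whose
root has indegree 0 and outdegree ≥ 2, from which every node is reachable, and in which
every non-root node is either a leaf (indegree 1, outdegree 0), an internal tree node
(indegree 1, outdegree ≥ 2) or a reticulation (indegree ≥ 2, outdegree 1). -/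
structure IsNetwork (A : V → V → Prop) (ρ : V) : Prop where
  finite : Finite V
  acyclic : ∀ v, ¬ Relation.TransGen A v v
  root_indeg : inDeg A ρ = 0
  root_outdeg : 2 ≤ outDeg A ρ
  reach_from_root : ∀ v, Relation.ReflTransGen A ρ v
  degree_cond : ∀ v, v ≠ ρ →
    (inDeg A v = 1 ∧ (outDeg A v = 0 ∨ 2 ≤ outDeg A v)) ∨ (2 ≤ inDeg A v ∧ outDeg A v = 1)

/-- Reticulation node: indegree ≥ 2 and outdegree 1. -/
def IsRet (A : V → V → Prop) (v : V) : Prop := 2 ≤ inDeg A v ∧ outDeg A v = 1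

/-- Leaf: indegree 1 and outdegree 0. -/
def IsLeaf (A : V → V → Prop) (v : V) : Prop := inDeg A v = 1 ∧ outDeg A v = 0

/-- Tree node: any node that is not a reticulation node. -/
def IsTreeNode (A : V → V → Prop) (v : V) : Prop := ¬ IsRet A v

/-- `u` is visible on `v`: every directed path from the root `ρ` to `v` contains `u`. -/
def Visible (A : V → V → Prop) (ρ u v : V) : Prop := ∀ p, IsPath A ρ v p → u ∈ p

/-- A network is reticulation-visible if every reticulation node is visible on some leaf. -/
def RetVisible (A : V → V → Prop) (ρ : V) : Prop :=
  ∀ r, IsRet A r → ∃ ℓ, IsLeaf A ℓ ∧ Visible A ρ r ℓ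

/-- Undirected adjacency in the subgraph `N − R(N)` induced on tree nodes. -/
def TAdj (A : V → V → Prop) (u v : V) : Prop :=
  IsTreeNode A u ∧ IsTreeNode A v ∧ (A u v ∨ A v u)

/-- `S` is a tree node component: a connected component (ignoring directions) of the
subgraph induced on the tree nodes. -/
def IsTNC (A : V → V → Prop) (S : Set V) : Prop :=
  ∃ u, IsTreeNode A u ∧ S = {v | Relation.ReflTransGen (TAdj A) u v}

/-- `r` is the root of the tree node component `S`: it lies in `S` and has indegree 0
within `N − R(N)`, i.e. it has no tree-node parent. -/
def CompRoot (A : V → V → Prop) (S : Set V) (r : V) : Prop :=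
  r ∈ S ∧ ∀ u, IsTreeNode A u → ¬ A u r

/-- Tree node component `C'` is below tree node component `C''`. -/
def Below (A : V → V → Prop) (C' C'' : Set V) : Prop :=
  ∃ r, IsRet A r ∧ (∃ c, A r c ∧ CompRoot A C' c) ∧ (∃ p ∈ C'', A p r)

/-- A big tree node component: a tree node component with at least two nodes. -/
def BigTNC (A : V → V → Prop) (C : Set V) : Prop :=
  IsTNC A C ∧ ∃ a ∈ C, ∃ b ∈ C, a ≠ b

/-- A single-leaf component: its node set is `{ℓ}` for some leaf `ℓ`. -/
def SingleLeafTNC (A : V → V → Prop) (C : Set V) : Prop :=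
  ∃ ℓ, IsLeaf A ℓ ∧ C = {ℓ}

/-- A lowest big tree node component: a big tree node component `C` such that every
tree node component whose root is a proper descendant of the root of `C` is a
single-leaf component. -/
def LowestBig (A : V → V → Prop) (C : Set V) : Prop :=
  BigTNC A C ∧ ∀ C' r' rC, IsTNC A C' → CompRoot A C' r' → CompRoot A C rC →
    Relation.TransGen A rC r' → SingleLeafTNC A C'

/-- An inner reticulation: all of its parents lie in one and the same tree node component. -/
def InnerRet (A : V → V → Prop) (r : V) : Prop :=
  IsRet A r ∧ ∃ S, IsTNC A S ∧ ∀ p, A p r → p ∈ S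

/-- `IR(C)`: reticulations all of whose parents lie in `C`. -/
def IRset (A : V → V → Prop) (C : Set V) : Set V :=
  {r | IsRet A r ∧ ∀ p, A p r → p ∈ C}

/-- `CR(C)`: reticulations with at least one parent in `C` and at least one parent outside `C`. -/
def CRset (A : V → V → Prop) (C : Set V) : Set V :=
  {r | IsRet A r ∧ (∃ p, A p r ∧ p ∈ C) ∧ (∃ p, A p r ∧ p ∉ C)}

/-- `L_C`: the leaves of the network lying in `C` together with the children of the
inner reticulations below `C`. -/
def LCset (A : V → V → Prop) (C : Set V) : Set V :=
  {ℓ | ℓ ∈ C ∧ IsLeaf A ℓ} ∪ {x | ∃ r ∈ IRset A C, A r x}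

/-- Bicombining: every reticulation node has indegree exactly 2. -/
def Bicombining (A : V → V → Prop) : Prop := ∀ r, IsRet A r → inDeg A r = 2

/-- Galled: every reticulation node `r` has an ancestor `u` admitting two
internal-node-disjoint directed paths from `u` to `r` in which every node other
than `r` is a tree node. -/
def Galled (A : V → V → Prop) : Prop :=
  ∀ r, IsRet A r → ∃ u, Relation.TransGen A u r ∧ ∃ p₁ p₂ : List V,
    IsPath A u r p₁ ∧ IsPath A u r p₂ ∧ p₁ ≠ p₂ ∧
    (∀ x, x ∈ p₁ → x ∈ p₂ → x = u ∨ x = r) ∧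
    (∀ x ∈ p₁, x ≠ r → IsTreeNode A x) ∧ (∀ x ∈ p₂, x ≠ r → IsTreeNode A x)

/-- Restriction of a digraph to a vertex subset. -/
def Restrict (A : V → V → Prop) (S : Set V) : V → V → Prop :=
  fun a b => a ∈ S ∧ b ∈ S ∧ A a b

/-- Descendants of `u` (including `u`); the vertex set of the subnetwork `D_N(u)`. -/
def Desc (A : V → V → Prop) (u : V) : Set V := {v | Relation.ReflTransGen A u v}

/-- Binary network: the root has outdegree 2, leaves have degree 1, and every other
node has total degree 3. -/
def IsBinary (A : V → V → Prop) (ρ : V) : Prop :=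
  outDeg A ρ = 2 ∧ ∀ v, v ≠ ρ →
    (inDeg A v = 1 ∧ outDeg A v = 0) ∨ (inDeg A v = 1 ∧ outDeg A v = 2) ∨
    (inDeg A v = 2 ∧ outDeg A v = 1)

/-- A phylogenetic tree: a network with no reticulation nodes. -/
def IsPhyloTree (A : W → W → Prop) (ρ : W) : Prop :=
  IsNetwork A ρ ∧ ∀ w, ¬ IsRet A w

/-- A node with indegree 1 and outdegree 1 (a suppressible node). -/
def Deg11 (A : V → V → Prop) (v : V) : Prop := inDeg A v = 1 ∧ outDeg A v = 1

/-- There is a directed path from `a` to `b` (of length ≥ 1) all of whose internal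
nodes are suppressible. -/
def SubdivPath (A : V → V → Prop) (a b : V) : Prop :=
  ∃ p : List V, IsPath A a b p ∧ 2 ≤ p.length ∧ ∀ z ∈ p, z ≠ a → z ≠ b → Deg11 A z

/-- `φ` witnesses that the digraph `A'` on the vertex set `S` is a subdivision of the
tree `AT` restricted to the vertex set `SW`: `φ` injectively maps the tree nodes onto
the non-suppressible nodes, edges of the tree correspond exactly to directed paths
whose internal nodes are suppressible, and leaves are mapped according to the leaf
correspondence `θ` (same labels). -/
def SubdivWitness (A' : V → V → Prop) (S : Set V) (AT : W → W → Prop) (SW : Set W)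
    (θ : W → V) (φ : W → V) : Prop :=
  Set.InjOn φ SW ∧ (∀ w ∈ SW, φ w ∈ S) ∧
  (∀ x ∈ S, ¬ Deg11 (Restrict A' S) x → ∃ w ∈ SW, φ w = x) ∧
  (∀ x ∈ SW, ∀ y ∈ SW, (Restrict AT SW x y ↔ SubdivPath (Restrict A' S) (φ x) (φ y))) ∧
  (∀ w ∈ SW, outDeg (Restrict AT SW) w = 0 → φ w = θ w)

/-- The digraph `A'` on vertex set `S` is a subdivision of the tree `AT` on `SW`. -/
def IsSubdivisionOf (A' : V → V → Prop) (S : Set V) (AT : W → W → Prop) (SW : Set W)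
    (θ : W → V) : Prop :=
  ∃ φ, SubdivWitness A' S AT SW θ φ

/-- `E`, `D`, `φ` witness that the subnetwork of `A` on vertex set `S` displays the
subtree of `AT` on vertex set `SW`: `E` is a set of reticulation edges of the
subnetwork containing all but one of the incoming edges of each reticulation node of
the subnetwork, `D` is a set of deleted nodes, and `φ` witnesses that the result is a
subdivision of the subtree. -/
def DisplayWitness (A : V → V → Prop) (S : Set V) (AT : W → W → Prop) (SW : Set W)
    (θ : W → V) (E : Set (V × V)) (D : Set V) (φ : W → V) : Prop :=
  (∀ e ∈ E, Restrict A S e.1 e.2 ∧ 2 ≤ inDeg (Restrict A S) e.2) ∧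
  (∀ r ∈ S, 2 ≤ inDeg (Restrict A S) r →
     ∃ p, Restrict A S p r ∧ (p, r) ∉ E ∧ ∀ q, Restrict A S q r → q ≠ p → (q, r) ∈ E) ∧
  SubdivWitness (fun a b => Restrict A S a b ∧ (a, b) ∉ E) (S \ D) AT SW θ φ

/-- The subnetwork of `A` on vertex set `S` displays the subtree of `AT` on `SW`. -/
def DisplaysOn (A : V → V → Prop) (S : Set V) (AT : W → W → Prop) (SW : Set W)
    (θ : W → V) : Prop :=
  ∃ E D φ, DisplayWitness A S AT SW θ E D φ

/-- The leaves of the subnetwork of `A` induced on vertex set `S`. -/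
def SubLeaves (A : V → V → Prop) (S : Set V) : Set V :=
  {v | v ∈ S ∧ outDeg (Restrict A S) v = 0}

/-- `B` is a soft cluster in the subnetwork of `A` on vertex set `S`: `B` is the
cluster of some node of some phylogenetic tree displayed by that subnetwork. -/
def SoftClusterOn (A : V → V → Prop) (S : Set V) (B : Set V) : Prop :=
  ∃ (W : Type) (AT : W → W → Prop) (ρT : W) (θ : W → V),
    IsPhyloTree AT ρT ∧
    Set.BijOn θ {w | IsLeaf AT w} (SubLeaves A S) ∧
    DisplaysOn A S AT Set.univ θ ∧
    ∃ x : W, θ '' {w | IsLeaf AT w ∧ Relation.ReflTransGen AT x w} = B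

/-- `B` is a soft cluster of the node `u` of `N`: there are `E` and `D` as in the
definition of display such that `u` is a node of `(N − E) − D` and the set of leaves
of `N` below `u` in `(N − E) − D` equals `B`. -/
def SoftClusterAt (A : V → V → Prop) (u : V) (B : Set V) : Prop :=
  ∃ (E : Set (V × V)) (D : Set V),
    (∀ e ∈ E, A e.1 e.2 ∧ 2 ≤ inDeg A e.2) ∧
    (∀ r, 2 ≤ inDeg A r → ∃ p, A p r ∧ (p, r) ∉ E ∧ ∀ q, A q r → q ≠ p → (q, r) ∈ E) ∧
    (∃ (W : Type) (AT : W → W → Prop) (ρT : W) (θ : W → V),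
      IsPhyloTree AT ρT ∧ Set.BijOn θ {w | IsLeaf AT w} {v | IsLeaf A v} ∧
      IsSubdivisionOf (fun a b => A a b ∧ (a, b) ∉ E) (Set.univ \ D) AT Set.univ θ) ∧
    u ∉ D ∧
    {ℓ | IsLeaf A ℓ ∧
      Relation.ReflTransGen (fun a b => A a b ∧ (a, b) ∉ E ∧ a ∉ D ∧ b ∉ D) u ℓ} = B

/-- `w` is the lowest common ancestor of the set `X` in the (tree-like) digraph `A`. -/
def IsLCAIn (A : V → V → Prop) (X : Set V) (w : V) : Prop :=
  (∀ x ∈ X, Relation.ReflTransGen A w x) ∧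
  ∀ w', (∀ x ∈ X, Relation.ReflTransGen A w' x) → Relation.ReflTransGen A w' w

end PhyloNet

namespace PhyloNet



variable {V : Type}

/-- Directed edge between tree nodes. -/
def TE (A : V → V → Prop) (a b : V) : Prop :=
  IsTreeNode A a ∧ IsTreeNode A b ∧ A a b

/-- `r` has no tree-node parent. -/
def NTP (A : V → V → Prop) (r : V) : Prop := ∀ u, IsTreeNode A u → ¬ A u r

lemma aux_wf {A : V → V → Prop} {ρ : V} (hN : IsNetwork A ρ) :
    WellFounded (fun p v : V => A p v) := by
  haveI := hN.finite
  haveI : IsTrans V (fun a b => Relation.TransGen A a b) :=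
    ⟨fun _ _ _ => Relation.TransGen.trans⟩
  haveI : IsIrrefl V (fun a b => Relation.TransGen A a b) := ⟨hN.acyclic⟩
  exact Subrelation.wf (fun h => Relation.TransGen.single h)
    (Finite.wellFounded_of_trans_of_irrefl _)

lemma aux_unique_parent {A : V → V → Prop} {ρ : V} (hN : IsNetwork A ρ) {v p q : V}
    (hv : IsTreeNode A v) (hp : A p v) (hq : A q v) : p = q := by
  haveI := hN.finite
  have hvρ : v ≠ ρ := by
    rintro rfl
    have h0 : {u | A u v}.ncard = 0 := hN.root_indeg
    rw [Set.ncard_eq_zero (Set.toFinite _)] at h0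
    exact absurd h0 (Set.nonempty_iff_ne_empty.mp ⟨p, hp⟩)
  rcases hN.degree_cond v hvρ with ⟨h1, _⟩ | h2
  · obtain ⟨a, ha⟩ := Set.ncard_eq_one.mp h1
    have hpa : p ∈ {u | A u v} := hp
    have hqa : q ∈ {u | A u v} := hq
    rw [ha] at hpa hqa
    simp only [Set.mem_singleton_iff] at hpa hqa
    exact hpa.trans hqa.symm
  · exact absurd h2 hv

lemma exists_croot {A : V → V → Prop} {ρ : V} (hN : IsNetwork A ρ) :
    ∀ v, IsTreeNode A v → ∃ r, NTP A r ∧ Relation.ReflTransGen (TE A) r v := by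
  intro v
  induction v using (aux_wf hN).induction with
  | _ v ih =>
    intro hv
    by_cases h : ∃ p, IsTreeNode A p ∧ A p v
    · obtain ⟨p, hpt, hpa⟩ := h
      obtain ⟨r, hr1, hr2⟩ := ih p hpa hpt
      exact ⟨r, hr1, hr2.tail ⟨hpt, hv, hpa⟩⟩
    · exact ⟨v, fun u hu ha => h ⟨u, hu, ha⟩, Relation.ReflTransGen.refl⟩

lemma croot_unique {A : V → V → Prop} {ρ : V} (hN : IsNetwork A ρ) :
    ∀ v, IsTreeNode A v → ∀ r r', NTP A r → Relation.ReflTransGen (TE A) r v →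
      NTP A r' → Relation.ReflTransGen (TE A) r' v → r = r' := by
  intro v
  induction v using (aux_wf hN).induction with
  | _ v ih =>
    intro hv r r' hr hrv hr' hr'v
    by_cases h : ∃ p, IsTreeNode A p ∧ A p v
    · obtain ⟨p, hpt, hpa⟩ := h
      have key : ∀ s, NTP A s → Relation.ReflTransGen (TE A) s v →
          Relation.ReflTransGen (TE A) s p := by
        intro s hs hsv
        rcases hsv.cases_tail with heq | ⟨c, hsc, hcv⟩
        · exact absurd hpa (heq ▸ hs p hpt)
        · have : c = p := aux_unique_parent hN hv hcv.2.2 hpa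
          exact this ▸ hsc
      exact ih p hpa hpt r r' hr (key r hr hrv) hr' (key r' hr' hr'v)
    · have key : ∀ s, NTP A s → Relation.ReflTransGen (TE A) s v → s = v := by
        intro s hs hsv
        rcases hsv.cases_tail with heq | ⟨c, _, hcv⟩
        · exact heq.symm
        · exact absurd hcv.2.2 (fun ha => h ⟨c, hcv.1, ha⟩)
      rw [key r hr hrv, key r' hr' hr'v]

lemma croot_tadj {A : V → V → Prop} {ρ : V} (hN : IsNetwork A ρ) {a b r : V}
    (hab : TAdj A a b) (hr : NTP A r) (hra : Relation.ReflTransGen (TE A) r a) :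
    Relation.ReflTransGen (TE A) r b := by
  rcases hab.2.2 with h | h
  · exact hra.tail ⟨hab.1, hab.2.1, h⟩
  · -- A b a : b is the unique tree parent of a
    rcases hra.cases_tail with heq | ⟨c, hrc, hca⟩
    · exact absurd h (heq ▸ hr b hab.2.1)
    · have : c = b := aux_unique_parent hN hab.1 hca.2.2 h
      exact this ▸ hrc

lemma croot_comp {A : V → V → Prop} {ρ : V} (hN : IsNetwork A ρ) {u v r : V}
    (h : Relation.ReflTransGen (TAdj A) u v) (hr : NTP A r)
    (hru : Relation.ReflTransGen (TE A) r u) : Relation.ReflTransGen (TE A) r v := by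
  induction h with
  | refl => exact hru
  | tail _ hbc ih => exact croot_tadj hN hbc hr ih

lemma rtg_symm {R : V → V → Prop} (hs : ∀ a b, R a b → R b a) {a b : V}
    (h : Relation.ReflTransGen R a b) : Relation.ReflTransGen R b a := by
  induction h with
  | refl => exact Relation.ReflTransGen.refl
  | tail _ h2 ih => exact Relation.ReflTransGen.head (hs _ _ h2) ih

lemma isPath_of_rtg {R : V → V → Prop} {a b : V} (h : Relation.ReflTransGen R a b) :
    ∃ p, IsPath R a b p := by
  induction h with
  | refl => exact ⟨[a], List.isChain_singleton a, rfl, rfl⟩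
  | @tail m c _ h2 ih =>
    obtain ⟨p, hc, hh, hl⟩ := ih
    rcases p with _ | ⟨x, t⟩
    · simp at hh
    refine ⟨(x :: t) ++ [c], ?_, ?_, ?_⟩
    · unfold List.Chain'; rw [List.isChain_append]
      refine ⟨hc, List.isChain_singleton _, ?_⟩
      intro y hy z hz
      simp only [List.head?_cons, Option.mem_def, Option.some.injEq] at hz
      rw [hl] at hy
      simp only [Option.mem_def, Option.some.injEq] at hy
      rw [← hy, ← hz]; exact h2
    · simpa using hh
    · exact List.getLast?_concat

lemma isPath_decomp {R : V → V → Prop} {a b : V} {p : List V} (h : IsPath R a b p) :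
    (p = [a] ∧ a = b) ∨ ∃ w q, IsPath R a w q ∧ R w b ∧ p = q ++ [b] := by
  obtain ⟨hc, hh, hl⟩ := h
  have hne : p ≠ [] := by rintro rfl; simp at hh
  obtain ⟨q, rfl⟩ : ∃ q, p = q ++ [b] := by
    refine ⟨p.dropLast, ?_⟩
    have hpd := List.dropLast_append_getLast hne
    have hlast : p.getLast hne = b := by
      rw [List.getLast?_eq_getLast hne] at hl
      exact Option.some_injective _ hl
    rw [hlast] at hpd; exact hpd.symm
  rcases eq_or_ne q [] with rfl | hq
  · left
    simp only [List.nil_append, List.head?_cons, Option.some.injEq] at hh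
    constructor
    · simp [hh]
    · exact hh.symm
  · right
    unfold List.Chain' at hc; rw [List.isChain_append] at hc
    obtain ⟨hc1, -, hstep⟩ := hc
    have hwl : q.getLast? = some (q.getLast hq) := List.getLast?_eq_getLast hq
    refine ⟨q.getLast hq, q, ⟨hc1, ?_, hwl⟩, hstep _ hwl b rfl, rfl⟩
    rw [← hh]
    exact (List.head?_append_of_ne_nil _ hq).symm


/-- In a network, every connected component (ignoring edge directions) of the subgraph
induced on the tree nodes contains exactly one node of indegree 0 within that
subgraph, and the component is a tree in which all edges are directed away from that
node (i.e. there is a unique directed path within the component from that node to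
every node of the component). -/
theorem tree_node_component_is_tree {V : Type} (A : V → V → Prop) (ρ : V)
    (hN : IsNetwork A ρ) (S : Set V) (hS : IsTNC A S) :
    ∃ r, (r ∈ S ∧ ∀ u, IsTreeNode A u → ¬ A u r) ∧
      (∀ r', (r' ∈ S ∧ ∀ u, IsTreeNode A u → ¬ A u r') → r' = r) ∧
      (∀ v ∈ S, ∃! p : List V, IsPath (Restrict A S) r v p) := by
  obtain ⟨u, hu, rfl⟩ := hS
  have hStree : ∀ v, Relation.ReflTransGen (TAdj A) u v → IsTreeNode A v := by
    intro v hv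
    induction hv with
    | refl => exact hu
    | tail _ h2 _ => exact h2.2.1
  obtain ⟨r, hrN, hru⟩ := exists_croot hN u hu
  have hmono : ∀ {a b : V}, Relation.ReflTransGen (TE A) a b →
      Relation.ReflTransGen (TAdj A) a b :=
    fun h => Relation.ReflTransGen.mono (r := TE A) (p := TAdj A) (fun a b h => ⟨h.1, h.2.1, Or.inl h.2.2⟩) _ _ h
  have hTAdjsymm : ∀ a b : V, TAdj A a b → TAdj A b a :=
    fun a b h => ⟨h.2.1, h.1, h.2.2.symm⟩
  have hrS : Relation.ReflTransGen (TAdj A) u r := rtg_symm hTAdjsymm (hmono hru)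
  have hSclose : ∀ x, Relation.ReflTransGen (TE A) r x →
      x ∈ {v | Relation.ReflTransGen (TAdj A) u v} :=
    fun x hx => Relation.ReflTransGen.trans hrS (hmono hx)
  set S := {v | Relation.ReflTransGen (TAdj A) u v} with hSdef
  have hRstr : ∀ v, Relation.ReflTransGen (TE A) r v →
      Relation.ReflTransGen (Restrict A S) r v := by
    intro v hv
    induction hv with
    | refl => exact Relation.ReflTransGen.refl
    | @tail b c hb h2 ih =>
      exact ih.tail ⟨hSclose b hb, hSclose c (hb.tail h2), h2.2.2⟩
  have E1 : ∀ a, ¬ Restrict A S a r := fun a ha => hrN a (hStree a ha.1) ha.2.2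
  have E2 : ∀ v p q, Restrict A S p v → Restrict A S q v → p = q :=
    fun v p q hp hq => aux_unique_parent hN (hStree v hp.2.1) hp.2.2 hq.2.2
  have huniq : ∀ v, ∀ p q : List V, IsPath (Restrict A S) r v p →
      IsPath (Restrict A S) r v q → p = q := by
    intro v
    induction v using (aux_wf hN).induction with
    | _ v ih =>
      intro p q hp hq
      rcases isPath_decomp hp with ⟨hp1, hpr⟩ | ⟨w, p', hp', hwv, rfl⟩
      · rcases isPath_decomp hq with ⟨hq1, _⟩ | ⟨w', q', hq', hw'v, rfl⟩
        · rw [hp1, hq1]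
        · exact absurd hw'v (hpr ▸ E1 w')
      · rcases isPath_decomp hq with ⟨hq1, hqr⟩ | ⟨w', q', hq', hw'v, rfl⟩
        · exact absurd hwv (hqr ▸ E1 w)
        · have hww : w' = w := E2 v w' w hw'v hwv
          subst hww
          rw [ih w' hwv.2.2 p' q' hp' hq']
  refine ⟨r, ⟨hrS, hrN⟩, ?_, ?_⟩
  · rintro r' ⟨hr'S, hr'N⟩
    exact croot_unique hN r' (hStree r' hr'S) r' r hr'N Relation.ReflTransGen.refl hrN
      (croot_comp hN hr'S hrN hru)
  · intro v hv
    obtain ⟨p, hp⟩ := isPath_of_rtg (hRstr v (croot_comp hN hv hrN hru))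
    exact ⟨p, hp, fun q hq => huniq v q p hq hp⟩


end PhyloNet
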